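/- Let r ≥ 2 be an integer, α₀, …, α_{r−1}, β ∈ ℂ, and set F(x,y,z) = x^r + x·y² + z² + Σ_{i=0}^{r−1} α_i·x^i + β·y, with zero set S ⊂ ℂ³. Let q : ℂ → ℂ be a polynomial function. If for every (x,y,z) ∈ S the point (x, −y + q(x), −z) also lies in S, then β = 0 and q(x) = 0 for every x ∈ ℂ. -/
import Mathlib


/-- Key step for the ℤ/2ℤ-action on fibers of type C_r, r odd: the linear term β
and the correction polynomial in the y-coordinate must vanish. -/
theorem stmt_8 (r : ℕ) (hr : 2 ≤ r) (α : ℕ → ℂ) (β : ℂ) (q : Polynomial ℂ)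
    (h : ∀ x y z : ℂ,
      x ^ r + x * y ^ 2 + z ^ 2 + (∑ i ∈ Finset.range r, α i * x ^ i) + β * y = 0 →
      x ^ r + x * (-y + q.eval x) ^ 2 + (-z) ^ 2
        + (∑ i ∈ Finset.range r, α i * x ^ i) + β * (-y + q.eval x) = 0) :
    β = 0 ∧ ∀ x : ℂ, q.eval x = 0 := by
  have key : ∀ x y : ℂ, (x * q.eval x + β) * (q.eval x - 2 * y) = 0 := by
    intro x y
    obtain ⟨z, hz⟩ := IsAlgClosed.exists_pow_nat_eq
      (-(x ^ r + x * y ^ 2 + (∑ i ∈ Finset.range r, α i * x ^ i) + β * y)) (n := 2) (by norm_num)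
    have h1 : x ^ r + x * y ^ 2 + z ^ 2 + (∑ i ∈ Finset.range r, α i * x ^ i) + β * y = 0 := by
      rw [hz]; ring
    have h2 := h x y z h1
    linear_combination h2 - h1
  have hlin : ∀ x : ℂ, x * q.eval x + β = 0 := by
    intro x
    have := key x (q.eval x / 2 + 1)
    have hne : q.eval x - 2 * (q.eval x / 2 + 1) ≠ 0 := by
      intro hc
      have : (-2 : ℂ) = 0 := by linear_combination hc
      norm_num at this
    exact (mul_eq_zero.mp this).resolve_right hne
  have hβ : β = 0 := by simpa using hlin 0
  refine ⟨hβ, ?_⟩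
  have hq0 : q = 0 := by
    apply Polynomial.eq_zero_of_infinite_isRoot
    apply Set.Infinite.mono (s := {x : ℂ | x ≠ 0})
    · intro x hx
      have := hlin x
      rw [hβ, add_zero] at this
      exact (mul_eq_zero.mp this).resolve_left hx
    · exact (Set.finite_singleton (0 : ℂ)).infinite_compl
  intro x; rw [hq0]; simp
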